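/- With the payment vector defined by p_i = DP_i(A, 0) - DP_N(A)/n for each agent i, the vector p is balanced (∑_i p_i = 0) and every agent's disproportionality equals DP_N(A)/n: DP_i(A, p) = DP_N(A)/n for all i. Consequently, min over payment vectors p of max_i DP_i(A, p) equals DP_N(A)/n. -/

import Mathlib

/-- With payments `p_i = DP_i(A,0) - DP_N(A)/n`, the vector `p` is balanced and every
agent's disproportionality equals `DP_N(A)/n`; consequently the minimum over payment
vectors of the maximum disproportionality equals `DP_N(A)/n`. -/
theorem stmt13 {Apt : Type*} {n : ℕ} (hn : 0 < n)
    (v : Fin n → Apt → ℝ) (o A : Fin n → Apt)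
    (DP0 : Fin n → ℝ)
    (hDP0 : ∀ i, DP0 i =
      (1 / (n : ℝ)) * ∑ j, (v i (A j) - v i (o j)) - (v i (A i) - v i (o i)))
    (DPN : ℝ) (hDPN : DPN = ∑ i, DP0 i)
    (p : Fin n → ℝ) (hp : ∀ i, p i = DP0 i - DPN / n) :
    (∑ i, p i = 0) ∧
    (∀ i : Fin n,
      (1 / (n : ℝ)) * ∑ j, (v i (A j) - v i (o j) + p j) - (v i (A i) - v i (o i) + p i)
        = DPN / n) ∧
    (∀ q : Fin n → ℝ, ∃ i : Fin n,
      (1 / (n : ℝ)) * ∑ j, (v i (A j) - v i (o j) + q j) - (v i (A i) - v i (o i) + q i)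
        ≥ DPN / n) := by
  have hn' : (n : ℝ) ≠ 0 := Nat.cast_ne_zero.mpr hn.ne'
  have hsum : ∑ i, p i = 0 := by
    simp only [hp, Finset.sum_sub_distrib, Finset.sum_const, Finset.card_univ,
      Fintype.card_fin, ← hDPN, nsmul_eq_mul]
    field_simp
    ring
  refine ⟨hsum, ?_, ?_⟩
  · intro i
    have h1 : ∑ j, (v i (A j) - v i (o j) + p j)
        = ∑ j, (v i (A j) - v i (o j)) := by
      rw [Finset.sum_add_distrib, hsum, add_zero]
    rw [h1]
    have := hDP0 i
    have := hp i
    linarith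
  · intro q
    set g : Fin n → ℝ := fun i =>
      (1 / (n : ℝ)) * ∑ j, (v i (A j) - v i (o j) + q j) - (v i (A i) - v i (o i) + q i)
      with hg
    have hgi : ∀ i, g i = DP0 i + (1 / (n : ℝ)) * ∑ j, q j - q i := by
      intro i
      rw [hg]
      simp only [Finset.sum_add_distrib, mul_add, hDP0 i]
      ring
    have hsumg : ∑ i, g i = DPN := by
      simp only [hgi, hDPN]
      rw [Finset.sum_sub_distrib, Finset.sum_add_distrib]
      simp only [Finset.sum_const, Finset.card_univ, Fintype.card_fin, nsmul_eq_mul]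
      field_simp
      ring
    by_contra hcon
    push_neg at hcon
    have : ∑ i, g i < ∑ i : Fin n, DPN / n := by
      refine Finset.sum_lt_sum_of_nonempty ?_ fun i _ => hcon i
      exact Finset.univ_nonempty_iff.mpr ⟨⟨0, hn⟩⟩
    rw [hsumg] at this
    simp only [Finset.sum_const, Finset.card_univ, Fintype.card_fin, nsmul_eq_mul] at this
    rw [mul_div_cancel₀ _ hn'] at this
    exact lt_irrefl _ this
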